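/- arXiv:1801.09028 — 2 statements merged into one kernel-verified Lean document; each statement's English description precedes it below -/
import Mathlib

section
/- Let n be a positive integer and w : {-1,1}^n → [0,∞) a weight function with nonempty support. For every β with 0 < β ≤ 1/2, there exist a point x̄ ∈ {-1,1}^n with w(x̄) > 0 and an integer m with 0 ≤ m ≤ n such that R(w) ≥ log₂ w(x̄) + m and w(x̄) ≥ (1−β)^{n−m} · β^m · Z(w). -/
open Finset

/-- Map a boolean to the corresponding element of `{-1, 1} ⊆ ℝ`. -/
noncomputable def sgn (b : Bool) : ℝ := if b then 1 else -1

/-- Standard inner product on `ℝ^ι` restricted to the cube `{-1,1}^ι`. -/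
noncomputable def ip {ι : Type*} [Fintype ι] [DecidableEq ι] (c x : ι → Bool) : ℝ :=
  ∑ i, sgn (c i) * sgn (x i)

/-- `δ(c, w)`: the maximum over the support of `w` of `⟨c,x⟩ + log₂ w(x)`. -/
noncomputable def wdelta {ι : Type*} [Fintype ι] [DecidableEq ι] (c : ι → Bool) (w : (ι → Bool) → ℝ) : ℝ :=
  sSup {y : ℝ | ∃ x, 0 < w x ∧ y = ip c x + Real.logb 2 (w x)}

/-- The weighted Rademacher complexity `R(w) = E_c[δ(c,w)]`, `c` uniform on the cube. -/
noncomputable def wRad {ι : Type*} [Fintype ι] [DecidableEq ι] (w : (ι → Bool) → ℝ) : ℝ :=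
  (∑ c : ι → Bool, wdelta c w) / 2 ^ (Fintype.card ι)

/-- `Z(w)`: the total weight. -/
noncomputable def Zw {ι : Type*} [Fintype ι] [DecidableEq ι] (w : (ι → Bool) → ℝ) : ℝ := ∑ x, w x

/-- `w_min`: the smallest positive weight. -/
noncomputable def wmin {ι : Type*} [Fintype ι] [DecidableEq ι] (w : (ι → Bool) → ℝ) : ℝ :=
  sInf {y : ℝ | ∃ x, 0 < w x ∧ y = w x}

/-- `w_max`: the largest weight. -/
noncomputable def wmax {ι : Type*} [Fintype ι] [DecidableEq ι] (w : (ι → Bool) → ℝ) : ℝ :=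
  sSup {y : ℝ | ∃ x, y = w x}
lemma sgn_mul_self (b : Bool) : sgn b * sgn b = 1 := by cases b <;> simp [sgn]

lemma sgn_not (b : Bool) : sgn (!b) = - sgn b := by cases b <;> simp [sgn]

lemma ip_self {n : ℕ} (c : Fin n → Bool) : ip c c = n := by
  simp [ip, sgn_mul_self]

lemma sum_sgn {n : ℕ} (i : Fin n) : ∑ c : Fin n → Bool, sgn (c i) = 0 := by
  refine Finset.sum_involution (fun c _ => Function.update c i (!(c i))) ?_ ?_ ?_ ?_
  · intro c _; simp [sgn_not]
  · intro c _ h hc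
    have := congrFun hc i
    simp at this
  · intro c _; exact Finset.mem_univ _
  · intro c _
    funext j
    by_cases hj : j = i
    · subst hj; simp
    · simp [Function.update_of_ne hj]

lemma sum_ip {n : ℕ} (x : Fin n → Bool) : ∑ c : Fin n → Bool, ip c x = 0 := by
  unfold ip
  rw [Finset.sum_comm]
  apply Finset.sum_eq_zero
  intro i _
  rw [← Finset.sum_mul, sum_sgn i, zero_mul]

lemma card_cube (n : ℕ) : Fintype.card (Fin n → Bool) = 2 ^ n := by
  simp [Fintype.card_fun]

def Vball (n k : ℕ) : ℕ := ∑ j ∈ Finset.range (k+1), n.choose j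

lemma Vball_pos (n k : ℕ) : 0 < Vball n k := by
  unfold Vball
  calc 0 < n.choose 0 := by simp
  _ ≤ _ := Finset.single_le_sum (f := fun j => n.choose j) (by intros; positivity) (by simp)

lemma Vball_mono (n : ℕ) {k l : ℕ} (h : k ≤ l) : Vball n k ≤ Vball n l :=
  Finset.sum_le_sum_of_subset (Finset.range_subset_range.2 (by omega))

lemma Vball_self (n : ℕ) : Vball n n = 2 ^ n := Nat.sum_range_choose n

lemma Vball_le (n k : ℕ) : Vball n k ≤ 2 ^ n := by
  rcases le_total k n with h | h
  · rw [← Vball_self]; exact Vball_mono n h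
  · rw [← Vball_self, Vball, Vball]
    apply le_of_eq
    symm
    apply Finset.sum_subset (Finset.range_subset_range.2 (show n+1 ≤ k+1 by omega))
    intro j hj hj'
    simp only [Finset.mem_range] at hj hj'
    exact Nat.choose_eq_zero_of_lt (by omega)

lemma Vball_pascal (n k : ℕ) : Vball (n+1) (k+1) = Vball n (k+1) + Vball n k := by
  unfold Vball
  rw [Finset.sum_range_succ' (fun j => (n+1).choose j)]
  simp only [Nat.choose_succ_succ, Nat.choose_zero_right, Nat.succ_eq_add_one]
  rw [Finset.sum_add_distrib]
  rw [Finset.sum_range_succ' (fun j => n.choose j) (k+1)]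
  simp only [Nat.choose_zero_right]
  have : ∑ j ∈ Finset.range (k+1), n.choose (j+1) + 1 = ∑ j ∈ Finset.range (k+2), n.choose j := by
    rw [Finset.sum_range_succ' (fun j => n.choose j) (k+1)]
    simp
  omega

lemma Vball_succ_left_le (n k : ℕ) : Vball n k ≤ Vball (n+1) k := by
  apply Finset.sum_le_sum
  intro j _
  exact Nat.choose_le_choose j (Nat.le_succ n)


lemma ip_cons {n : ℕ} (b b' : Bool) (c' y : Fin n → Bool) :
    ip (Fin.cons b c') (Fin.cons b' y) = sgn b * sgn b' + ip c' y := by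
  unfold ip
  rw [Fin.sum_univ_succ]
  simp [Fin.cons_succ, Fin.cons_zero]

/-- bslice of `A` at last... first coordinate `b'` -/
def bslice {n : ℕ} (A : Finset (Fin (n+1) → Bool)) (b' : Bool) : Finset (Fin n → Bool) :=
  Finset.univ.filter (fun y : Fin n → Bool => Fin.cons b' y ∈ A)

lemma tail_mem_bslice {n : ℕ} {A : Finset (Fin (n+1) → Bool)} {x : Fin (n+1) → Bool}
    (hx : x ∈ A) : Fin.tail x ∈ bslice A (x 0) := by
  simp only [bslice, Finset.mem_filter, Finset.mem_univ, true_and]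
  rwa [Fin.cons_self_tail]

lemma card_split {n : ℕ} (A : Finset (Fin (n+1) → Bool)) :
    A.card = (bslice A true).card + (bslice A false).card := by
  classical
  have hA : A = Finset.univ.filter (fun x => x ∈ A) := by ext x; simp
  unfold bslice
  conv_lhs => rw [hA]
  rw [Finset.card_filter, Finset.card_filter, Finset.card_filter]
  rw [← Equiv.sum_comp (Fin.consEquiv (fun _ : Fin (n+1) => Bool))
    (fun x => if x ∈ A then 1 else 0)]
  rw [Fintype.sum_prod_type, Fintype.sum_bool]
  rfl

lemma sum_split {n : ℕ} (G : (Fin (n+1) → Bool) → ℝ) :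
    ∑ c, G c = ∑ c' : Fin n → Bool, (G (Fin.cons true c') + G (Fin.cons false c')) := by
  rw [← Equiv.sum_comp (Fin.consEquiv (fun _ : Fin (n+1) => Bool)) G]
  rw [Fintype.sum_prod_type, Fintype.sum_bool, ← Finset.sum_add_distrib]
  rfl

lemma le_sup'_bslice {n : ℕ} (A : Finset (Fin (n+1) → Bool)) (hA : A.Nonempty) (b b' : Bool)
    (hb' : (bslice A b').Nonempty) (c' : Fin n → Bool) :
    (bslice A b').sup' hb' (fun y => ip c' y) + sgn b * sgn b'
      ≤ A.sup' hA (fun x => ip (Fin.cons b c') x) := by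
  obtain ⟨y₀, hy₀, hy₀eq⟩ := Finset.exists_mem_eq_sup' hb' (fun y => ip c' y)
  rw [hy₀eq]
  have hmem : Fin.cons b' y₀ ∈ A := (Finset.mem_filter.1 hy₀).2
  have h := Finset.le_sup' (fun x => ip (Fin.cons b c') x) hmem
  simp only [ip_cons] at h
  linarith

lemma sup_sum_nonneg {n : ℕ} (A : Finset (Fin n → Bool)) (hA : A.Nonempty) :
    0 ≤ ∑ c, A.sup' hA (fun x => ip c x) := by
  obtain ⟨x₀, hx₀⟩ := id hA
  have h : ∀ c : Fin n → Bool, ip c x₀ ≤ A.sup' hA (fun x => ip c x) :=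
    fun c => Finset.le_sup' (fun x => ip c x) hx₀
  calc (0:ℝ) = ∑ c : Fin n → Bool, ip c x₀ := (sum_ip x₀).symm
  _ ≤ _ := Finset.sum_le_sum (fun c _ => h c)

lemma crux : ∀ (n : ℕ) (A : Finset (Fin n → Bool)) (hA : A.Nonempty) (k : ℕ),
    Vball n k < A.card →
    ((k:ℝ)+1) * 2^n ≤ ∑ c : Fin n → Bool, A.sup' hA (fun x => ip c x) := by
  intro n
  induction n with
  | zero =>
    intro A hA k hk
    exfalso
    have h1 : A.card ≤ 1 := by
      have := Finset.card_le_univ A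
      rwa [card_cube 0, pow_zero] at this
    have := Vball_pos 0 k
    omega
  | succ n IH =>
    intro A hA k hk
    have hAle : A.card ≤ 2^(n+1) := by
      have := Finset.card_le_univ A
      rwa [card_cube (n+1)] at this
    have hkn : k ≤ n := by
      by_contra h
      have h1 : Vball (n+1) (n+1) ≤ Vball (n+1) k := Vball_mono _ (by omega)
      rw [Vball_self] at h1
      omega
    have hcard := card_split A
    have hsum := sum_split (fun c => A.sup' hA (fun x => ip c x))
    -- key: if some bslice is big, done
    have key : ∀ b' : Bool, ∀ hb : (bslice A b').Nonempty, Vball n k < (bslice A b').card →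
        ((k:ℝ)+1) * 2^(n+1) ≤ ∑ c, A.sup' hA (fun x => ip c x) := by
      intro b' hb hcardb
      have h1 := IH (bslice A b') hb k hcardb
      rw [hsum]
      have h2 : ∀ c' : Fin n → Bool,
          ((bslice A b').sup' hb (fun y => ip c' y)) * 2 ≤
          A.sup' hA (fun x => ip (Fin.cons true c') x) +
            A.sup' hA (fun x => ip (Fin.cons false c') x) := by
        intro c'
        have l1 := le_sup'_bslice A hA true b' hb c'
        have l2 := le_sup'_bslice A hA false b' hb c'
        have hz : sgn true * sgn b' + sgn false * sgn b' = 0 := by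
          cases b' <;> simp [sgn]
        linarith
      have h3 := Finset.sum_le_sum (fun c' (_ : c' ∈ Finset.univ) => h2 c')
      rw [← Finset.sum_mul] at h3
      have hpow : (2:ℝ)^(n+1) = 2^n * 2 := by ring
      rw [hpow]
      nlinarith [h1, h3]
    by_cases ht : (bslice A true).Nonempty
    · by_cases hf : (bslice A false).Nonempty
      · by_cases h1 : Vball n k < (bslice A true).card
        · exact key true ht h1
        · by_cases h2 : Vball n k < (bslice A false).card
          · exact key false hf h2
          · -- both bslices small
            push_neg at h1 h2
            -- per c' lower bound: sum of the two sups ≥ S_t + S_f + 2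
            have pair : ∀ c' : Fin n → Bool,
                (bslice A true).sup' ht (fun y => ip c' y) +
                (bslice A false).sup' hf (fun y => ip c' y) + 2 ≤
                A.sup' hA (fun x => ip (Fin.cons true c') x) +
                  A.sup' hA (fun x => ip (Fin.cons false c') x) := by
              intro c'
              have l1 := le_sup'_bslice A hA true true ht c'
              have l2 := le_sup'_bslice A hA false false hf c'
              rw [sgn_mul_self] at l1
              rw [sgn_mul_self] at l2
              linarith
            have hps := Finset.sum_le_sum (fun c' (_ : c' ∈ Finset.univ) => pair c')
            rw [← hsum] at hps
            simp only [Finset.sum_add_distrib, Finset.sum_const, Finset.card_univ,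
              card_cube n, nsmul_eq_mul] at hps
            match k with
            | 0 =>
              have n1 := sup_sum_nonneg (bslice A true) ht
              have n2 := sup_sum_nonneg (bslice A false) hf
              have hpow : (2:ℝ)^(n+1) = 2^n * 2 := by ring
              push_cast at hps ⊢
              linarith
            | k' + 1 =>
              have hp := Vball_pascal n k'
              have hc1 : Vball n k' < (bslice A true).card := by omega
              have hc2 : Vball n k' < (bslice A false).card := by omega
              have i1 := IH (bslice A true) ht k' hc1
              have i2 := IH (bslice A false) hf k' hc2
              have hid : ((k':ℝ)+1+1) * 2^(n+1) = ((k':ℝ)+1) * 2^n + ((k':ℝ)+1) * 2^n + 2^n * 2 := by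
                ring
              push_cast at hps ⊢
              linarith
      · -- bslice false empty
        have hf0 : (bslice A false).card = 0 := by
          rwa [Finset.card_eq_zero, ← Finset.not_nonempty_iff_eq_empty]
        exact key true ht (by have := Vball_succ_left_le n k; omega)
    · by_cases hf : (bslice A false).Nonempty
      · have ht0 : (bslice A true).card = 0 := by
          rwa [Finset.card_eq_zero, ← Finset.not_nonempty_iff_eq_empty]
        exact key false hf (by have := Vball_succ_left_le n k; omega)
      · exfalso
        obtain ⟨x, hx⟩ := hA
        have := tail_mem_bslice hx
        cases h0 : x 0
        · rw [h0] at this; exact hf ⟨_, this⟩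
        · rw [h0] at this; exact ht ⟨_, this⟩

/-- the defining set of `wdelta` is finite -/
lemma wdelta_set_finite {n : ℕ} (c : Fin n → Bool) (w : (Fin n → Bool) → ℝ) :
    {y : ℝ | ∃ x, 0 < w x ∧ y = ip c x + Real.logb 2 (w x)}.Finite := by
  apply Set.Finite.subset (Set.finite_range (fun x => ip c x + Real.logb 2 (w x)))
  rintro y ⟨x, _, rfl⟩
  exact ⟨x, rfl⟩

lemma wdelta_ge {n : ℕ} (c : Fin n → Bool) (w : (Fin n → Bool) → ℝ) {x : Fin n → Bool}
    (hx : 0 < w x) : ip c x + Real.logb 2 (w x) ≤ wdelta c w :=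
  le_csSup (wdelta_set_finite c w).bddAbove ⟨x, hx, rfl⟩

lemma sum_wdelta {n : ℕ} (w : (Fin n → Bool) → ℝ) :
    ∑ c : Fin n → Bool, wdelta c w = wRad w * 2 ^ n := by
  have : wRad w = (∑ c : Fin n → Bool, wdelta c w) / 2 ^ n := by
    unfold wRad; norm_num
  rw [this]
  field_simp

lemma R_ge_g {n : ℕ} (w : (Fin n → Bool) → ℝ) {x : Fin n → Bool} (hx : 0 < w x) :
    Real.logb 2 (w x) ≤ wRad w := by
  have h1 : ∑ c : Fin n → Bool, (ip c x + Real.logb 2 (w x)) ≤ ∑ c : Fin n → Bool, wdelta c w :=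
    Finset.sum_le_sum (fun c _ => wdelta_ge c w hx)
  rw [Finset.sum_add_distrib, sum_ip, Finset.sum_const, Finset.card_univ, card_cube,
    sum_wdelta] at h1
  have h2 : (0:ℝ) < 2 ^ n := by positivity
  have h3 : (2:ℝ)^n * Real.logb 2 (w x) ≤ wRad w * 2^n := by simpa using h1
  have h4 : Real.logb 2 (w x) * 2^n ≤ wRad w * 2^n := by linarith
  exact le_of_mul_le_mul_right h4 h2

section main
variable {n : ℕ} (w : (Fin n → Bool) → ℝ)

/-- the per-point level -/
noncomputable def klev (w : (Fin n → Bool) → ℝ) (x : Fin n → Bool) : ℕ :=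
  min n ⌊wRad w - Real.logb 2 (w x)⌋₊

lemma klev_le (x : Fin n → Bool) : klev w x ≤ n := min_le_left _ _

lemma klev_le_sub {x : Fin n → Bool} (hx : 0 < w x) :
    (klev w x : ℝ) ≤ wRad w - Real.logb 2 (w x) := by
  have h0 : (0:ℝ) ≤ wRad w - Real.logb 2 (w x) := sub_nonneg.2 (R_ge_g w hx)
  calc (klev w x : ℝ) ≤ (⌊wRad w - Real.logb 2 (w x)⌋₊ : ℝ) :=
        Nat.cast_le.2 (min_le_right _ _)
  _ ≤ _ := Nat.floor_le h0

/-- counting lemma -/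
lemma count_le [NeZero n] (j : ℕ) :
    ((Finset.univ.filter (fun x => 0 < w x)).filter (fun x => klev w x ≤ j)).card ≤ Vball n j := by
  classical
  rcases le_or_gt n j with hj | hj
  · calc _ ≤ Fintype.card (Fin n → Bool) := Finset.card_le_univ _
    _ = 2^n := card_cube n
    _ = Vball n n := (Vball_self n).symm
    _ ≤ Vball n j := Vball_mono n hj
  · by_contra hgt
    push_neg at hgt
    set A := ((Finset.univ.filter (fun x => 0 < w x)).filter (fun x => klev w x ≤ j)) with hA
    have hAne : A.Nonempty := Finset.card_pos.1 (by have := Vball_pos n j; omega)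
    have hcrux := crux n A hAne j hgt
    have hpt : ∀ c : Fin n → Bool,
        A.sup' hAne (fun x => ip c x) + (wRad w - ((j:ℝ)+1)) < wdelta c w := by
      intro c
      obtain ⟨xc, hxcA, hxceq⟩ := Finset.exists_mem_eq_sup' hAne (fun x => ip c x)
      have hxc : 0 < w xc := (Finset.mem_filter.1 (Finset.mem_filter.1 hxcA).1).2
      have hklev : klev w xc ≤ j := (Finset.mem_filter.1 hxcA).2
      have hfl : ⌊wRad w - Real.logb 2 (w xc)⌋₊ ≤ j := by
        unfold klev at hklev; omega
      have hlt : wRad w - Real.logb 2 (w xc) < (j:ℝ) + 1 := by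
        have h1 := Nat.lt_floor_add_one (wRad w - Real.logb 2 (w xc))
        have h2 : ((⌊wRad w - Real.logb 2 (w xc)⌋₊ : ℝ)) ≤ j := Nat.cast_le.2 hfl
        linarith
      have hd := wdelta_ge c w hxc
      rw [hxceq]
      linarith
    have hsumlt : ∑ c : Fin n → Bool, (A.sup' hAne (fun x => ip c x) + (wRad w - ((j:ℝ)+1)))
        < ∑ c : Fin n → Bool, wdelta c w :=
      Finset.sum_lt_sum_of_nonempty Finset.univ_nonempty (fun c _ => hpt c)
    rw [Finset.sum_add_distrib, Finset.sum_const, Finset.card_univ, card_cube,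
      sum_wdelta] at hsumlt
    have e : ((2:ℕ)^n) • (wRad w - ((j:ℝ)+1))
        = (2:ℝ)^n * wRad w - ((j:ℝ)+1) * 2^n := by
      rw [nsmul_eq_mul]; push_cast; ring
    rw [e] at hsumlt
    have e2 : wRad w * 2^n = (2:ℝ)^n * wRad w := by ring
    rw [e2] at hsumlt
    linarith

/-- Abel summation identity -/
lemma abel_id (f : ℕ → ℝ) (n : ℕ) : ∀ m : ℕ,
    ∑ j ∈ Finset.range (m+1), (n.choose j : ℝ) * f j
      = (Vball n m : ℝ) * f m + ∑ j ∈ Finset.range m, (Vball n j : ℝ) * (f j - f (j+1)) := by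
  intro m
  induction m with
  | zero => simp [Vball]
  | succ m IH =>
    rw [Finset.sum_range_succ
      (f := fun j => (n.choose j : ℝ) * f j), IH,
      Finset.sum_range_succ (f := fun j => (Vball n j : ℝ) * (f j - f (j+1)))]
    have hV : Vball n (m+1) = Vball n m + n.choose (m+1) := Finset.sum_range_succ _ _
    rw [hV]
    push_cast
    ring

/-- the main weight-sum bound -/
lemma weight_sum_le [NeZero n] (hw : ∀ x, 0 ≤ w x) (β : ℝ) (hβ0 : 0 < β) (hβ1 : β ≤ 1/2) :
    ∑ x ∈ Finset.univ.filter (fun x => 0 < w x), (1-β)^(n - klev w x) * β^(klev w x) ≤ 1 := by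
  classical
  set supp := Finset.univ.filter (fun x : Fin n → Bool => 0 < w x) with hsupp
  set f : ℕ → ℝ := fun j => (1-β)^(n-j) * β^j with hf
  have hb : (0:ℝ) ≤ 1 - β := by linarith
  have hfnn : ∀ j, 0 ≤ f j := fun j => mul_nonneg (pow_nonneg hb _) (pow_nonneg hβ0.le _)
  have hFd : ∀ j, j < n → 0 ≤ f j - f (j+1) := by
    intro j hj
    have e2 : n - j = (n - (j+1)) + 1 := by omega
    have : f j - f (j+1) = (1-β)^(n-(j+1)) * β^j * (1 - 2*β) := by
      rw [hf]; simp only; rw [e2, pow_succ, pow_succ]; ring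
    rw [this]
    have ha := pow_nonneg hb (n-(j+1))
    have hb2 := pow_nonneg hβ0.le j
    have hc : (0:ℝ) ≤ 1 - 2*β := by linarith
    exact mul_nonneg (mul_nonneg ha hb2) hc
  -- telescoping per point
  have htel : ∀ x ∈ supp, f (klev w x)
      = f n + ∑ j ∈ Finset.Ico (klev w x) n, (f j - f (j+1)) := by
    intro x _
    have hkn : klev w x ≤ n := klev_le w x
    have t1 : ∑ j ∈ Finset.Ico (klev w x) n, (f j - f (j+1))
        = ∑ j ∈ Finset.range n, (f j - f (j+1))
          - ∑ j ∈ Finset.range (klev w x), (f j - f (j+1)) :=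
      Finset.sum_Ico_eq_sub _ hkn
    rw [t1, Finset.sum_range_sub' f n, Finset.sum_range_sub' f (klev w x)]
    ring
  rw [Finset.sum_congr rfl htel]
  rw [Finset.sum_add_distrib, Finset.sum_const]
  -- rewrite the Ico sums as filtered range sums and swap
  have hIco : ∀ x ∈ supp, ∑ j ∈ Finset.Ico (klev w x) n, (f j - f (j+1))
      = ∑ j ∈ Finset.range n, if klev w x ≤ j then f j - f (j+1) else 0 := by
    intro x _
    rw [← Finset.sum_filter]
    congr 1
    ext j
    simp only [Finset.mem_Ico, Finset.mem_filter, Finset.mem_range]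
    omega
  rw [Finset.sum_congr rfl hIco, Finset.sum_comm]
  have hinner : ∀ j ∈ Finset.range n,
      ∑ x ∈ supp, (if klev w x ≤ j then f j - f (j+1) else 0)
        ≤ (Vball n j : ℝ) * (f j - f (j+1)) := by
    intro j hj
    rw [← Finset.sum_filter, Finset.sum_const, nsmul_eq_mul]
    apply mul_le_mul_of_nonneg_right _ (hFd j (Finset.mem_range.1 hj))
    exact_mod_cast count_le w j
  have hcard : (supp.card : ℝ) ≤ 2^n := by
    have h1 : supp.card ≤ 2^n := by
      calc supp.card ≤ Fintype.card (Fin n → Bool) := Finset.card_le_univ _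
      _ = 2^n := card_cube n
    exact_mod_cast h1
  have step1 : supp.card • f n + ∑ j ∈ Finset.range n,
        (∑ x ∈ supp, if klev w x ≤ j then f j - f (j+1) else 0)
      ≤ (2:ℝ)^n * f n + ∑ j ∈ Finset.range n, (Vball n j : ℝ) * (f j - f (j+1)) := by
    apply add_le_add
    · rw [nsmul_eq_mul]
      exact mul_le_mul_of_nonneg_right hcard (hfnn n)
    · exact Finset.sum_le_sum hinner
  have step2 : (2:ℝ)^n * f n + ∑ j ∈ Finset.range n, (Vball n j : ℝ) * (f j - f (j+1)) = 1 := by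
    have h1 := abel_id f n n
    rw [Vball_self] at h1
    push_cast at h1
    rw [← h1]
    have h3 := add_pow β (1-β) n
    have h4 : β + (1-β) = 1 := by ring
    rw [h4, one_pow] at h3
    rw [h3]
    apply Finset.sum_congr rfl
    intro j _
    rw [hf]
    ring
  linarith [step1, step2]

end main

theorem stmt14 (n : ℕ) (hn : 0 < n) (w : (Fin n → Bool) → ℝ)
    (hw : ∀ x, 0 ≤ w x) (hsupp : ∃ x, 0 < w x)
    (β : ℝ) (hβ0 : 0 < β) (hβ1 : β ≤ 1 / 2) :
    ∃ xbar : Fin n → Bool, 0 < w xbar ∧ ∃ m : ℕ, m ≤ n ∧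
      wRad w ≥ Real.logb 2 (w xbar) + m ∧
      w xbar ≥ (1 - β) ^ (n - m) * β ^ m * Zw w := by
  classical
  haveI : NeZero n := ⟨hn.ne'⟩
  by_contra hcon
  push_neg at hcon
  set supp := Finset.univ.filter (fun x : Fin n → Bool => 0 < w x) with hsuppdef
  obtain ⟨x₀, hx₀⟩ := hsupp
  have hx₀s : x₀ ∈ supp := by simp [hsuppdef, hx₀]
  have hsne : supp.Nonempty := ⟨x₀, hx₀s⟩
  have hZ : Zw w = ∑ x ∈ supp, w x := by
    rw [Zw]
    symm
    apply Finset.sum_subset (Finset.filter_subset _ _)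
    intro x _ hx
    simp only [hsuppdef, Finset.mem_filter, Finset.mem_univ, true_and, not_lt] at hx
    exact le_antisymm hx (hw x)
  have hZpos : 0 < Zw w := by
    rw [hZ]
    exact Finset.sum_pos (fun x hx => (Finset.mem_filter.1 hx).2) hsne
  have hlt : ∀ x ∈ supp, w x < (1-β)^(n - klev w x) * β^(klev w x) * Zw w := by
    intro x hx
    have hxw : 0 < w x := (Finset.mem_filter.1 hx).2
    apply hcon x hxw (klev w x) (klev_le w x)
    have := klev_le_sub w hxw
    rw [ge_iff_le]
    linarith
  have hsumlt : ∑ x ∈ supp, w x < ∑ x ∈ supp, (1-β)^(n - klev w x) * β^(klev w x) * Zw w :=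
    Finset.sum_lt_sum_of_nonempty hsne hlt
  have hT := weight_sum_le w hw β hβ0 hβ1
  have hfact : ∑ x ∈ supp, (1-β)^(n - klev w x) * β^(klev w x) * Zw w
      = (∑ x ∈ supp, (1-β)^(n - klev w x) * β^(klev w x)) * Zw w := by
    rw [Finset.sum_mul]
  rw [hfact] at hsumlt
  rw [← hZ] at hsumlt
  have := mul_le_mul_of_nonneg_right hT hZpos.le
  rw [one_mul] at this
  -- hT is over the same filtered set as supp
  have : Zw w < Zw w := lt_of_lt_of_le hsumlt this
  exact lt_irrefl _ this
end

section
/- Let n be a positive integer and w : {-1,1}^n → [0,∞) a weight function with nonempty support. For all real λ > 0 and γ > 0, writing w^γ for the weight function x ↦ w(x)^γ, one has R(w^γ) ≤ (1/λ)·log₂( Σ_{x ∈ {-1,1}^n} w(x)^{λγ} ) + λn/2, where the sum is taken over the support of w. -/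
open Finset

set_option maxHeartbeats 1000000 in
theorem stmt18 (n : ℕ) (hn : 0 < n) (w : (Fin n → Bool) → ℝ)
    (hw : ∀ x, 0 ≤ w x) (hsupp : ∃ x, 0 < w x)
    (lam gam : ℝ) (hlam : 0 < lam) (hgam : 0 < gam) :
    wRad (fun x => w x ^ gam) ≤
      (1 / lam) * Real.logb 2 (∑ x ∈ Finset.univ.filter (fun x => 0 < w x),
        w x ^ (lam * gam)) + lam * n / 2 := by
  classical
  set T := Finset.univ.filter (fun x : Fin n → Bool => 0 < w x) with hT
  have hTne : T.Nonempty := by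
    obtain ⟨x, hx⟩ := hsupp
    exact ⟨x, Finset.mem_filter.mpr ⟨Finset.mem_univ x, hx⟩⟩
  set A : ℝ := (2:ℝ) ^ lam + (2:ℝ) ^ (-lam) with hA
  set Z : ℝ := ∑ x ∈ T, w x ^ (lam * gam) with hZdef
  have hZpos : 0 < Z := Finset.sum_pos
    (fun x hx => Real.rpow_pos_of_pos (Finset.mem_filter.mp hx).2 _) hTne
  set S : (Fin n → Bool) → ℝ :=
    fun c => ∑ x ∈ T, w x ^ (lam * gam) * (2:ℝ) ^ (lam * ip c x) with hS
  have htermpos : ∀ c x, x ∈ T → 0 < w x ^ (lam * gam) * (2:ℝ) ^ (lam * ip c x) :=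
    fun c x hx => mul_pos (Real.rpow_pos_of_pos (Finset.mem_filter.mp hx).2 _)
      (Real.rpow_pos_of_pos two_pos _)
  have hSpos : ∀ c, 0 < S c := fun c => Finset.sum_pos (htermpos c) hTne
  -- Step A
  have stepA : ∀ c, wdelta c (fun x => w x ^ gam) ≤ (1/lam) * Real.logb 2 (S c) := by
    intro c
    apply csSup_le
    · obtain ⟨x, hx⟩ := hsupp
      exact ⟨ip c x + Real.logb 2 (w x ^ gam), x, Real.rpow_pos_of_pos hx _, rfl⟩
    · rintro y ⟨x, hx, rfl⟩
      have hx' : 0 < w x ^ gam := hx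
      have hwx : 0 < w x := by
        rcases lt_or_eq_of_le (hw x) with h | h
        · exact h
        · rw [← h, Real.zero_rpow hgam.ne'] at hx'; exact absurd hx' (lt_irrefl 0)
      have hxT : x ∈ T := Finset.mem_filter.mpr ⟨Finset.mem_univ x, hwx⟩
      have hle : w x ^ (lam * gam) * (2:ℝ) ^ (lam * ip c x) ≤ S c :=
        Finset.single_le_sum (fun y hy => (htermpos c y hy).le) hxT
      have hlog := Real.logb_le_logb_of_le one_lt_two (htermpos c x hxT) hle
      rw [Real.logb_mul (Real.rpow_pos_of_pos hwx (lam*gam)).ne'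
        (Real.rpow_pos_of_pos two_pos (lam * ip c x)).ne'] at hlog
      rw [Real.logb_rpow_eq_mul_logb_of_pos hwx,
        Real.logb_rpow two_pos (by norm_num)] at hlog
      rw [Real.logb_rpow_eq_mul_logb_of_pos hwx, one_div, ← div_eq_inv_mul,
        le_div_iff₀ hlam]
      nlinarith [hlog]
  -- key sum computation
  have key : ∀ x : Fin n → Bool,
      ∑ c : Fin n → Bool, (2:ℝ) ^ (lam * ip c x) = A ^ n := by
    intro x
    have h1 : ∀ c : Fin n → Bool, (2:ℝ) ^ (lam * ip c x)
        = ∏ i, Real.exp (Real.log 2 * (lam * (sgn (c i) * sgn (x i)))) := by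
      intro c
      rw [Real.rpow_def_of_pos two_pos, ip, Finset.mul_sum, Finset.mul_sum, Real.exp_sum]
    simp_rw [h1]
    have h2 : ∑ c ∈ Fintype.piFinset (fun _ : Fin n => (Finset.univ : Finset Bool)),
        ∏ i, Real.exp (Real.log 2 * (lam * (sgn (c i) * sgn (x i))))
        = ∏ i : Fin n, ∑ b : Bool, Real.exp (Real.log 2 * (lam * (sgn b * sgn (x i)))) :=
      Finset.sum_prod_piFinset (Finset.univ : Finset Bool)
        (fun i b => Real.exp (Real.log 2 * (lam * (sgn b * sgn (x i)))))
    rw [← Fintype.piFinset_univ] at *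
    rw [h2]
    have h3 : ∀ i : Fin n,
        ∑ b : Bool, Real.exp (Real.log 2 * (lam * (sgn b * sgn (x i)))) = A := by
      intro i
      have hAe : A = Real.exp (Real.log 2 * lam) + Real.exp (Real.log 2 * (-lam)) := by
        rw [hA, Real.rpow_def_of_pos two_pos, Real.rpow_def_of_pos two_pos]
      cases hxi : x i <;>
        simp [sgn, Fintype.sum_bool, hAe, mul_comm, mul_assoc, mul_neg, neg_mul] <;> ring_nf
    rw [Finset.prod_congr rfl (fun i _ => h3 i), Finset.prod_const, Finset.card_univ,
      Fintype.card_fin]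
  have stepD : ∑ c : Fin n → Bool, S c = Z * A ^ n := by
    simp only [hS, hZdef]
    rw [Finset.sum_comm, Finset.sum_mul]
    refine Finset.sum_congr rfl fun x hx => ?_
    rw [← Finset.mul_sum, key x]
  -- Jensen / AM-GM step
  set u : ℝ := ((2:ℝ) ^ n)⁻¹ with hu
  have hupos : 0 < u := by positivity
  have husum : ∑ _c : Fin n → Bool, u = 1 := by
    rw [Finset.sum_const, Finset.card_univ, nsmul_eq_mul]
    simp only [Fintype.card_fun, Fintype.card_bool, Fintype.card_fin]
    push_cast
    rw [hu, mul_inv_cancel₀ (by positivity)]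
  have geo : ∏ c : Fin n → Bool, (S c) ^ u ≤ ∑ c : Fin n → Bool, u * S c :=
    Real.geom_mean_le_arith_mean_weighted _ _ _ (fun _ _ => hupos.le) husum
      (fun c _ => (hSpos c).le)
  have hprodpos : 0 < ∏ c : Fin n → Bool, (S c) ^ u :=
    Finset.prod_pos fun c _ => Real.rpow_pos_of_pos (hSpos c) _
  have stepC : ∑ c : Fin n → Bool, u * Real.logb 2 (S c)
      ≤ Real.logb 2 (∑ c : Fin n → Bool, u * S c) := by
    have h := Real.logb_le_logb_of_le one_lt_two hprodpos geo
    rwa [Real.logb_prod _ _ (fun c _ => (Real.rpow_pos_of_pos (hSpos c) _).ne'),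
      Finset.sum_congr rfl (fun c _ => Real.logb_rpow_eq_mul_logb_of_pos (hSpos c))] at h
  -- final cosh bound
  have hlog2pos : 0 < Real.log 2 := Real.log_pos one_lt_two
  have hlog2lt1 : Real.log 2 < 1 := by
    have := Real.log_two_lt_d9; linarith
  have hA2 : A / 2 = Real.cosh (Real.log 2 * lam) := by
    rw [Real.cosh_eq, hA, Real.rpow_def_of_pos two_pos, Real.rpow_def_of_pos two_pos]
    ring_nf
  have hA2pos : 0 < A / 2 := by
    rw [hA2]; exact Real.cosh_pos _
  have hcosh : Real.logb 2 (A / 2) ≤ lam ^ 2 / 2 := by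
    have h1 : Real.log (A / 2) ≤ (Real.log 2 * lam) ^ 2 / 2 := by
      rw [hA2]
      calc Real.log (Real.cosh (Real.log 2 * lam))
          ≤ Real.log (Real.exp ((Real.log 2 * lam) ^ 2 / 2)) :=
            Real.log_le_log (Real.cosh_pos _) (Real.cosh_le_exp_half_sq _)
        _ = (Real.log 2 * lam) ^ 2 / 2 := Real.log_exp _
    rw [Real.logb, div_le_iff₀ hlog2pos]
    nlinarith [mul_nonneg (sq_nonneg lam)
      (mul_nonneg hlog2pos.le (by linarith : (0:ℝ) ≤ 1 - Real.log 2))]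
  -- assemble
  have hwRad : wRad (fun x => w x ^ gam)
      = ∑ c : Fin n → Bool, (wdelta c fun x => w x ^ gam) / 2 ^ n := by
    rw [wRad, Fintype.card_fin, Finset.sum_div]
  rw [hwRad]
  have step1 : ∑ c : Fin n → Bool, (wdelta c fun x => w x ^ gam) / 2 ^ n
      ≤ (1/lam) * ∑ c : Fin n → Bool, u * Real.logb 2 (S c) := by
    rw [Finset.mul_sum]
    refine Finset.sum_le_sum fun c _ => ?_
    rw [div_le_iff₀ (by positivity : (0:ℝ) < 2 ^ n)]
    have := stepA c
    calc (wdelta c fun x => w x ^ gam) ≤ (1/lam) * Real.logb 2 (S c) := stepA c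
      _ = 1 / lam * (u * Real.logb 2 (S c)) * 2 ^ n := by
          rw [hu]; field_simp
  have step2 : (1:ℝ)/lam * ∑ c : Fin n → Bool, u * Real.logb 2 (S c)
      ≤ (1/lam) * Real.logb 2 (Z * (A/2) ^ n) := by
    have hrw : ∑ c : Fin n → Bool, u * S c = Z * (A/2) ^ n := by
      rw [← Finset.mul_sum, stepD, div_pow, hu]
      field_simp
    rw [← hrw]
    exact mul_le_mul_of_nonneg_left stepC (by positivity)
  have step3 : (1:ℝ)/lam * Real.logb 2 (Z * (A/2) ^ n)
      ≤ (1/lam) * Real.logb 2 Z + lam * n / 2 := by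
    rw [Real.logb_mul hZpos.ne' (by positivity : ((A:ℝ)/2) ^ n ≠ 0), Real.logb_pow,
      mul_add]
    have h4 : (1:ℝ)/lam * (n * Real.logb 2 (A/2)) ≤ lam * n / 2 := by
      calc (1:ℝ)/lam * (n * Real.logb 2 (A/2))
          ≤ (1:ℝ)/lam * (n * (lam ^ 2 / 2)) := by
            apply mul_le_mul_of_nonneg_left _ (by positivity)
            exact mul_le_mul_of_nonneg_left hcosh (by positivity)
        _ = lam * n / 2 := by field_simp
    linarith
  calc ∑ c : Fin n → Bool, (wdelta c fun x => w x ^ gam) / 2 ^ n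
      ≤ (1/lam) * ∑ c : Fin n → Bool, u * Real.logb 2 (S c) := step1
    _ ≤ (1/lam) * Real.logb 2 (Z * (A/2) ^ n) := step2
    _ ≤ (1/lam) * Real.logb 2 Z + lam * n / 2 := step3
end
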